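/- The pair (a,b) with a(r) = 0 and b(r) = 1/R₊(r) = √2/√(r²+1) satisfies the invariant HYM system: da/dr = -r/(2R₋²), db/dr = -r/(2R₊²), R₊²(1-b²) = R₋²(1-a²), and ab = 0, where R₊² = (r²+1)/2 and R₋² = (r²-1)/2; moreover, (a,b) = (0, -√2/√(r²+1)) is the only other solution satisfying all four conditions. -/

import Mathlib

/-- The invariant HYM system for SO(3)-connections on `P_Id`: the ODEs
`da/dr = -(r/(2R₋²))·a`, `db/dr = -(r/(2R₊²))·b` together with the algebraic constraints
`R₊²(1-b²) = R₋²(1-a²)` and `ab = 0`, where `R₊² = (r²+1)/2`, `R₋² = (r²-1)/2`. -/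
def IsInvariantHYM (a b : ℝ → ℝ) : Prop :=
  ∀ r ∈ Set.Ioi (1 : ℝ),
    HasDerivAt a (-(r / (2 * ((r ^ 2 - 1) / 2))) * a r) r ∧
    HasDerivAt b (-(r / (2 * ((r ^ 2 + 1) / 2))) * b r) r ∧
    ((r ^ 2 + 1) / 2) * (1 - (b r) ^ 2) = ((r ^ 2 - 1) / 2) * (1 - (a r) ^ 2) ∧
    a r * b r = 0

noncomputable def fHYM (r : ℝ) : ℝ := Real.sqrt 2 / Real.sqrt (r ^ 2 + 1)

lemma fHYM_pos {r : ℝ} (_ : 1 < r) : 0 < fHYM r := by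
  unfold fHYM
  have : (0:ℝ) < r ^ 2 + 1 := by positivity
  positivity

lemma fHYM_sq {r : ℝ} (_ : 1 < r) : (fHYM r) ^ 2 = 2 / (r ^ 2 + 1) := by
  unfold fHYM
  have h1 : (0:ℝ) < r ^ 2 + 1 := by positivity
  rw [div_pow, Real.sq_sqrt (by norm_num : (0:ℝ) ≤ 2), Real.sq_sqrt h1.le]

lemma fHYM_hasDerivAt {r : ℝ} (hr : 1 < r) :
    HasDerivAt fHYM (-(r / (2 * ((r ^ 2 + 1) / 2))) * fHYM r) r := by
  have hpos : (0:ℝ) < r ^ 2 + 1 := by positivity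
  have hs : Real.sqrt (r ^ 2 + 1) ≠ 0 := by positivity
  have h1 : HasDerivAt (fun x : ℝ => x ^ 2 + 1) (2 * r) r := by
    simpa using ((hasDerivAt_pow 2 r).add_const 1)
  have h2 : HasDerivAt (fun x : ℝ => Real.sqrt (x ^ 2 + 1))
      (1 / (2 * Real.sqrt (r ^ 2 + 1)) * (2 * r)) r :=
    (Real.hasDerivAt_sqrt hpos.ne').comp r h1
  have h3 := (hasDerivAt_const r (Real.sqrt 2)).div h2 hs
  refine h3.congr_deriv ?_
  have hsq : Real.sqrt (r ^ 2 + 1) ^ 2 = r ^ 2 + 1 := Real.sq_sqrt hpos.le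
  unfold fHYM
  field_simp
  rw [hsq]
  nlinarith [hsq, Real.sqrt_nonneg (r^2+1), Real.sqrt_nonneg 2]

lemma hym_pos : IsInvariantHYM (fun _ => 0) (fun r => Real.sqrt 2 / Real.sqrt (r ^ 2 + 1)) := by
  intro r hr
  have hr1 : (1:ℝ) < r := hr
  refine ⟨by simpa using hasDerivAt_const r (0:ℝ), fHYM_hasDerivAt hr1, ?_, by simp⟩
  have h := fHYM_sq hr1
  have hpos : (0:ℝ) < r ^ 2 + 1 := by positivity
  show ((r ^ 2 + 1) / 2) * (1 - (fHYM r) ^ 2) = _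
  rw [h]; field_simp; ring

lemma hym_neg {a b : ℝ → ℝ} (h : IsInvariantHYM a b) :
    IsInvariantHYM a (fun r => -(b r)) := by
  intro r hr
  obtain ⟨h1, h2, h3, h4⟩ := h r hr
  refine ⟨h1, by have h2n := h2.neg; simp only [neg_mul, mul_neg, neg_neg] at h2n ⊢; exact h2n, ?_, by rw [mul_neg, h4, neg_zero]⟩
  simpa [neg_sq] using h3

/-- The pair `(a,b) = (0, √2/√(r²+1))` solves the invariant HYM system, and
`(0, -√2/√(r²+1))` is the only other solution. -/
theorem stenzel_so3_hym_solutions :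
    IsInvariantHYM (fun _ => 0) (fun r => Real.sqrt 2 / Real.sqrt (r ^ 2 + 1)) ∧
    IsInvariantHYM (fun _ => 0) (fun r => -(Real.sqrt 2 / Real.sqrt (r ^ 2 + 1))) ∧
    ∀ a b : ℝ → ℝ, IsInvariantHYM a b →
      (∀ r ∈ Set.Ioi (1 : ℝ), a r = 0) ∧
      ((∀ r ∈ Set.Ioi (1 : ℝ), b r = Real.sqrt 2 / Real.sqrt (r ^ 2 + 1)) ∨
        (∀ r ∈ Set.Ioi (1 : ℝ), b r = -(Real.sqrt 2 / Real.sqrt (r ^ 2 + 1)))) := by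
  refine ⟨hym_pos, hym_neg hym_pos, ?_⟩
  intro a b h
  have ha : ∀ r ∈ Set.Ioi (1:ℝ), a r = 0 := by
    intro r hr
    obtain ⟨_, _, hc, hab⟩ := h r hr
    have hr1 : (1:ℝ) < r := hr
    rcases mul_eq_zero.mp hab with h0 | h0
    · exact h0
    · exfalso; rw [h0] at hc
      nlinarith [mul_nonneg (show (0:ℝ) ≤ r^2-1 by nlinarith) (sq_nonneg (a r))]
  refine ⟨ha, ?_⟩
  have hb2 : ∀ r ∈ Set.Ioi (1:ℝ), (b r) ^ 2 = (fHYM r) ^ 2 := by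
    intro r hr
    obtain ⟨_, _, hc, _⟩ := h r hr
    have hr1 : (1:ℝ) < r := hr
    rw [ha r hr] at hc
    rw [fHYM_sq hr1]
    have hpos : (0:ℝ) < r ^ 2 + 1 := by positivity
    field_simp
    nlinarith
  have hbne : ∀ r ∈ Set.Ioi (1:ℝ), b r ≠ 0 := by
    intro r hr h0
    have := hb2 r hr
    rw [h0] at this
    have hp := fHYM_pos (show (1:ℝ) < r from hr)
    nlinarith
  have hcases : ∀ r ∈ Set.Ioi (1:ℝ), b r = fHYM r ∨ b r = -(fHYM r) := by
    intro r hr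
    have := hb2 r hr
    exact sq_eq_sq_iff_eq_or_eq_neg.mp this
  have hbcont : ContinuousOn b (Set.Ioi 1) :=
    fun r hr => ((h r hr).2.1.continuousAt).continuousWithinAt
  by_cases hx : ∀ r ∈ Set.Ioi (1:ℝ), b r = Real.sqrt 2 / Real.sqrt (r ^ 2 + 1)
  · exact Or.inl hx
  · right
    push_neg at hx
    obtain ⟨r1, hr1, hne⟩ := hx
    have hb1 : b r1 = -(fHYM r1) := by
      rcases hcases r1 hr1 with h1 | h1
      · exact absurd h1 hne
      · exact h1
    intro r2 hr2
    rcases hcases r2 hr2 with h2 | h2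
    · exfalso
      have hsub : Set.uIcc r1 r2 ⊆ Set.Ioi 1 := by
        intro x hx
        have h1 : min r1 r2 ≤ x := hx.1
        have : (1:ℝ) < min r1 r2 := lt_min hr1 hr2
        exact lt_of_lt_of_le this h1
      have h0mem : (0:ℝ) ∈ Set.uIcc (b r1) (b r2) := by
        rw [Set.mem_uIcc]
        left
        constructor
        · rw [hb1]; linarith [fHYM_pos (show (1:ℝ) < r1 from hr1)]
        · rw [h2]; linarith [fHYM_pos (show (1:ℝ) < r2 from hr2)]
      obtain ⟨r0, hr0mem, hr00⟩ := intermediate_value_uIcc (hbcont.mono hsub) h0mem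
      exact hbne r0 (hsub hr0mem) hr00
    · exact h2
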